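/- Let G be a finite abelian group of order n, D(G) its generalized dihedral group (assumed non-abelian), \Gamma the commuting graph of D(G), and z = |{g \in G : g^2 = e}|. Then the degree of a vertex v in \Gamma is: 2n - 1 if v = (g, 1) with g^2 = e (i.e., v \in Z(D(G))); n - 1 if v = (g, 1) with g^2 \ne e; and 2z - 1 if v = (g, -1). -/

import Mathlib

/-- The generalized dihedral group `D(G) = G ⋊ C₂`, with `⟨g, false⟩`
representing `(g, 1)` and `⟨g, true⟩` representing `(g, -1)`.
Multiplication is `(g₁, c₁)(g₂, c₂) = (g₁ g₂^{c₁}, c₁ c₂)`, i.e. `-1` acts by inversion. -/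
@[ext]
structure GenDihedral (G : Type) where
  g : G
  b : Bool
  deriving DecidableEq

namespace GenDihedral

variable {G : Type} [CommGroup G]

instance : Mul (GenDihedral G) :=
  ⟨fun a c => ⟨a.g * (if a.b then c.g⁻¹ else c.g), xor a.b c.b⟩⟩

instance : One (GenDihedral G) := ⟨⟨1, false⟩⟩

instance : Inv (GenDihedral G) := ⟨fun a => ⟨if a.b then a.g else a.g⁻¹, a.b⟩⟩

theorem mul_def (a c : GenDihedral G) :
    a * c = ⟨a.g * (if a.b then c.g⁻¹ else c.g), xor a.b c.b⟩ := rfl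

theorem one_def : (1 : GenDihedral G) = ⟨1, false⟩ := rfl

theorem inv_def (a : GenDihedral G) : a⁻¹ = ⟨if a.b then a.g else a.g⁻¹, a.b⟩ := rfl

instance : Group (GenDihedral G) where
  mul_assoc a c d := by
    obtain ⟨g₁, b₁⟩ := a; obtain ⟨g₂, b₂⟩ := c; obtain ⟨g₃, b₃⟩ := d
    cases b₁ <;> cases b₂ <;> cases b₃ <;>
      simp [mul_def, mul_assoc, mul_comm, mul_left_comm, mul_inv, inv_inv]
  one_mul a := by obtain ⟨g, b⟩ := a; cases b <;> simp [mul_def, one_def]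
  mul_one a := by obtain ⟨g, b⟩ := a; cases b <;> simp [mul_def, one_def]
  inv_mul_cancel a := by
    obtain ⟨g, b⟩ := a; cases b <;> simp [mul_def, one_def, inv_def]

instance [Fintype G] : Fintype (GenDihedral G) :=
  Fintype.ofEquiv (G × Bool)
    ⟨fun p => ⟨p.1, p.2⟩, fun x => (x.g, x.b), fun _ => rfl, fun _ => rfl⟩

instance [DecidableEq G] (a c : GenDihedral G) : Decidable (Commute a c) :=
  decidable_of_iff (a * c = c * a) Iff.rfl

end GenDihedral

namespace GenDihedral

/-- The commuting graph of `D(G)`: vertices are the elements of `D(G)`, and two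
distinct vertices are adjacent iff they commute. -/
def commGraph (G : Type) [CommGroup G] : SimpleGraph (GenDihedral G) where
  Adj u v := u ≠ v ∧ u * v = v * u
  symm := ⟨fun _ _ h => ⟨h.1.symm, h.2.symm⟩⟩
  loopless := ⟨fun _ h => h.1 rfl⟩

instance {G : Type} [CommGroup G] [DecidableEq G] : DecidableRel (commGraph G).Adj :=
  fun u v => inferInstanceAs (Decidable (u ≠ v ∧ u * v = v * u))

end GenDihedral


namespace GenDihedral
open Finset

variable {G : Type} [CommGroup G] [Fintype G] [DecidableEq G]

lemma inv_comm_iff {a g : G} : a * g⁻¹ = g * a⁻¹ ↔ g ^ 2 = a ^ 2 := by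
  constructor
  · intro h
    have h2 : a * g⁻¹ * (g * a) = g * a⁻¹ * (g * a) := by rw [h]
    have h3 : a * a = g * g := by
      calc a * a = a * g⁻¹ * (g * a) := by group
      _ = g * a⁻¹ * (g * a) := h2
      _ = g * g * (a⁻¹ * a) := by simp [mul_comm, mul_left_comm, mul_assoc]
      _ = g * g := by simp
    rw [sq, sq, h3]
  · intro h
    have h3 : a * a = g * g := by rw [← sq, ← sq, h]
    have h4 : a * g⁻¹ * (g * a) = g * a⁻¹ * (g * a) := by
      calc a * g⁻¹ * (g * a) = a * a := by group
      _ = g * g := h3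
      _ = g * g * (a⁻¹ * a) := by simp
      _ = g * a⁻¹ * (g * a) := by simp [mul_comm, mul_left_comm, mul_assoc]
    exact mul_right_cancel h4

lemma split_card (P : GenDihedral G → Prop) [DecidablePred P] :
    (univ.filter P).card =
      (univ.filter fun g : G => P ⟨g, false⟩).card +
      (univ.filter fun g : G => P ⟨g, true⟩).card := by
  have h : (univ.filter P) =
      ((univ.filter fun g : G => P ⟨g, false⟩).image fun g => (⟨g, false⟩ : GenDihedral G)) ∪
      ((univ.filter fun g : G => P ⟨g, true⟩).image fun g => (⟨g, true⟩ : GenDihedral G)) := by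
    ext ⟨g, b⟩
    cases b <;> simp [GenDihedral.ext_iff]
  have hinj1 : Function.Injective fun g : G => (⟨g, false⟩ : GenDihedral G) :=
    fun a b hab => congrArg GenDihedral.g hab
  have hinj2 : Function.Injective fun g : G => (⟨g, true⟩ : GenDihedral G) :=
    fun a b hab => congrArg GenDihedral.g hab
  have hdisj : Disjoint
      ((univ.filter fun g : G => P ⟨g, false⟩).image fun g => (⟨g, false⟩ : GenDihedral G))
      ((univ.filter fun g : G => P ⟨g, true⟩).image fun g => (⟨g, true⟩ : GenDihedral G)) := by
    simp only [Finset.disjoint_left, Finset.mem_image]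
    rintro x ⟨g, _, rfl⟩ ⟨g', _, h⟩
    exact absurd (congrArg GenDihedral.b h) (by simp)
  rw [h, card_union_of_disjoint hdisj, card_image_of_injective _ hinj1,
    card_image_of_injective _ hinj2]

lemma degree_eq (v : GenDihedral G) :
    (commGraph G).degree v = (univ.filter fun u => v * u = u * v).card - 1 := by
  rw [SimpleGraph.degree, SimpleGraph.neighborFinset_eq_filter]
  have h : (univ.filter fun u => (commGraph G).Adj v u) =
      (univ.filter fun u => v * u = u * v).erase v := by
    ext u
    simp only [commGraph, mem_filter, mem_univ, true_and, mem_erase]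
    exact ⟨fun h => ⟨Ne.symm (mem_filter.mp h).2.1, (mem_filter.mp h).2.2⟩,
      fun h => mem_filter.mpr ⟨mem_univ _, Ne.symm h.1, h.2⟩⟩
  rw [h, card_erase_of_mem (by simp)]

lemma card_sq_eq (a : G) : (univ.filter fun g : G => g ^ 2 = a ^ 2).card =
    (univ.filter fun g : G => g ^ 2 = 1).card := by
  apply Finset.card_nbij' (fun g => g * a⁻¹) (fun g => g * a)
  · intro g hg
    simp only [mem_coe, mem_filter, mem_univ, true_and] at hg ⊢
    rw [mul_pow, hg, inv_pow, mul_inv_cancel]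
  · intro g hg
    simp only [mem_coe, mem_filter, mem_univ, true_and] at hg ⊢
    rw [mul_pow, hg, one_mul]
  · intro g _; simp
  · intro g _; simp

end GenDihedral

open GenDihedral in
/-- Degrees in the commuting graph of a non-abelian `D(G)` of order `2n` with
`z = |{g : g² = e}|`: a central vertex `(g,1)` (with `g² = e`) has degree `2n - 1`,
a vertex `(g,1)` with `g² ≠ e` has degree `n - 1`, and a vertex `(g,-1)` has degree
`2z - 1`. -/
theorem stmt7 {G : Type} [CommGroup G] [Fintype G] [DecidableEq G]
    (hna : ∃ g : G, g ^ 2 ≠ 1) (n z : ℕ) (hn : n = Fintype.card G)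
    (hz : z = (Finset.univ.filter fun g : G => g ^ 2 = 1).card)
    (v : GenDihedral G) :
    (commGraph G).degree v =
      if v.b = false then (if v.g ^ 2 = 1 then 2 * n - 1 else n - 1) else 2 * z - 1 := by
  obtain ⟨a, b⟩ := v
  rw [degree_eq, split_card]
  cases b
  · have h1 : (Finset.univ.filter fun g : G =>
        (⟨a, false⟩ : GenDihedral G) * ⟨g, false⟩ = ⟨g, false⟩ * ⟨a, false⟩) = Finset.univ := by
      ext g; simp [mul_def, GenDihedral.ext_iff, mul_comm]
    by_cases ha : a ^ 2 = 1
    · have h2 : (Finset.univ.filter fun g : G =>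
          (⟨a, false⟩ : GenDihedral G) * ⟨g, true⟩ = ⟨g, true⟩ * ⟨a, false⟩) = Finset.univ := by
        ext g
        have haa : a = a⁻¹ := by rw [eq_inv_iff_mul_eq_one, ← sq, ha]
        simp [mul_def, GenDihedral.ext_iff, mul_comm g a, ← haa]
      simp only [h1, h2, Finset.card_univ, ← hn, if_pos ha, reduceIte]
      omega
    · have h2 : (Finset.univ.filter fun g : G =>
          (⟨a, false⟩ : GenDihedral G) * ⟨g, true⟩ = ⟨g, true⟩ * ⟨a, false⟩) = ∅ := by
        ext g
        simp only [Finset.mem_filter, Finset.mem_univ, true_and, Finset.notMem_empty,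
          iff_false, mul_def, GenDihedral.ext_iff]
        intro h
        apply ha
        have h5 : a * g = g * a⁻¹ := by simpa using h.1
        rw [mul_comm g a⁻¹] at h5
        have h6 : a = a⁻¹ := mul_right_cancel h5
        rw [sq]
        nth_rewrite 1 [h6]
        exact inv_mul_cancel a
      simp only [h1, h2, Finset.card_univ, Finset.card_empty, ← hn, if_neg ha, reduceIte]
      omega
  · have h1 : (Finset.univ.filter fun g : G =>
        (⟨a, true⟩ : GenDihedral G) * ⟨g, false⟩ = ⟨g, false⟩ * ⟨a, true⟩) =
        (Finset.univ.filter fun g : G => g ^ 2 = 1) := by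
      ext g
      simp only [Finset.mem_filter, Finset.mem_univ, true_and, mul_def, GenDihedral.ext_iff]
      constructor
      · rintro ⟨h, -⟩
        have h5 : a * g⁻¹ = g * a := by simpa using h
        rw [mul_comm g a] at h5
        have h6 : g⁻¹ = g := mul_left_cancel h5
        rw [sq]
        nth_rewrite 1 [← h6]
        exact inv_mul_cancel g
      · intro h
        have hg : g⁻¹ = g := by rw [inv_eq_iff_mul_eq_one, ← sq, h]
        simp [hg, mul_comm]
    have h2 : (Finset.univ.filter fun g : G =>
        (⟨a, true⟩ : GenDihedral G) * ⟨g, true⟩ = ⟨g, true⟩ * ⟨a, true⟩) =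
        (Finset.univ.filter fun g : G => g ^ 2 = a ^ 2) := by
      ext g
      simp only [Finset.mem_filter, Finset.mem_univ, true_and, mul_def, GenDihedral.ext_iff]
      constructor
      · rintro ⟨h, -⟩
        exact inv_comm_iff.mp (by simpa using h)
      · intro h
        simpa using inv_comm_iff.mpr h
    rw [h1, h2, card_sq_eq, ← hz]
    simp only [Bool.true_eq_false, if_false]
    omega
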